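/- Let u ∈ C²[0,π] with u(0) = u(π) = 0 satisfy -u'' = λ u' + u + (λ - u²)u² on (0,π) with u > 0 on (0,π). Then 0 < λ ≤ 4(1 + √2)². -/

import Mathlib

open Set Real

/-- If `u ∈ C²[0,π]` is a positive solution of `-u'' = λ u' + u + (λ - u²)u²` on `(0,π)`
with `u(0) = u(π) = 0`, then `0 < λ ≤ 4(1 + √2)²`. -/
theorem positive_solution_lambda_bounds (lam : ℝ) (u u' u'' : ℝ → ℝ)
    (hu' : ∀ x ∈ Icc (0:ℝ) π, HasDerivWithinAt u (u' x) (Icc 0 π) x)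
    (hu'' : ∀ x ∈ Icc (0:ℝ) π, HasDerivWithinAt u' (u'' x) (Icc 0 π) x)
    (hcont : ContinuousOn u'' (Icc 0 π))
    (hode : ∀ x ∈ Ioo (0:ℝ) π,
      -(u'' x) = lam * u' x + u x + (lam - (u x)^2) * (u x)^2)
    (hbc0 : u 0 = 0) (hbcpi : u π = 0)
    (hpos : ∀ x ∈ Ioo (0:ℝ) π, 0 < u x) :
    0 < lam ∧ lam ≤ 4 * (1 + Real.sqrt 2)^2 := by
  have hπ : (0:ℝ) < π := Real.pi_pos
  have hucont : ContinuousOn u (Icc 0 π) := fun x hx => (hu' x hx).continuousWithinAt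
  have hu'cont : ContinuousOn u' (Icc 0 π) := fun x hx => (hu'' x hx).continuousWithinAt
  set F : ℝ → ℝ := fun x => Real.exp (lam * x / 2) *
      ((u' x + lam / 2 * u x) * Real.sin x - u x * Real.cos x) with hF
  set G : ℝ → ℝ := fun x => Real.exp (lam * x / 2) *
      ((u'' x + lam * u' x + (lam ^ 2 / 4 + 1) * u x) * Real.sin x) with hG
  have hFderiv : ∀ x ∈ Icc (0:ℝ) π, HasDerivWithinAt F (G x) (Icc 0 π) x := by
    intro x hx
    have hexp : HasDerivWithinAt (fun y => Real.exp (lam * y / 2))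
        (Real.exp (lam * x / 2) * (lam / 2)) (Icc 0 π) x := by
      have h : HasDerivAt (fun y => Real.exp (lam * y / 2))
          (Real.exp (lam * x / 2) * (lam / 2)) x := by
        have h1 : HasDerivAt (fun y : ℝ => lam * y / 2) (lam / 2) x := by
          simpa using ((hasDerivAt_id x).const_mul lam).div_const 2
        exact (Real.hasDerivAt_exp (lam * x / 2)).comp x h1
      exact h.hasDerivWithinAt
    have hsin : HasDerivWithinAt Real.sin (Real.cos x) (Icc 0 π) x :=
      (Real.hasDerivAt_sin x).hasDerivWithinAt
    have hcos : HasDerivWithinAt Real.cos (-Real.sin x) (Icc 0 π) x :=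
      (Real.hasDerivAt_cos x).hasDerivWithinAt
    have hA : HasDerivWithinAt (fun y => u' y + lam / 2 * u y)
        (u'' x + lam / 2 * u' x) (Icc 0 π) x :=
      (hu'' x hx).add ((hu' x hx).const_mul (lam / 2))
    have hinner : HasDerivWithinAt
        (fun y => (u' y + lam / 2 * u y) * Real.sin y - u y * Real.cos y)
        ((u'' x + lam / 2 * u' x) * Real.sin x + (u' x + lam / 2 * u x) * Real.cos x
          - (u' x * Real.cos x + u x * (-Real.sin x))) (Icc 0 π) x :=
      (hA.mul hsin).sub ((hu' x hx).mul hcos)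
    have := hexp.mul hinner
    refine this.congr_deriv ?_
    simp only [hG]
    ring
  have hGcont : ContinuousOn G (Icc 0 π) := by
    apply ContinuousOn.mul
    · exact (Real.continuous_exp.comp (by continuity)).continuousOn
    · exact (((hcont.add (hu'cont.const_smul lam)).add (hucont.const_smul (lam ^ 2 / 4 + 1))).mul
        Real.continuous_sin.continuousOn)
  have hGint : IntervalIntegrable G MeasureTheory.volume 0 π := by
    apply ContinuousOn.intervalIntegrable
    rwa [uIcc_of_le hπ.le]
  have key : ∫ x in (0:ℝ)..π, G x = F π - F 0 := by
    apply intervalIntegral.integral_eq_sub_of_hasDeriv_right_of_le hπ.le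
    · exact fun x hx => (hFderiv x hx).continuousWithinAt
    · intro x hx
      exact (((hFderiv x (Ioo_subset_Icc_self hx)).hasDerivAt
        (Icc_mem_nhds hx.1 hx.2)).hasDerivWithinAt)
    · exact hGint
  have hF0 : F 0 = 0 := by simp [hF, hbc0]
  have hFπ : F π = 0 := by simp [hF, hbcpi]
  have hzero : ∫ x in (0:ℝ)..π, G x = 0 := by rw [key, hF0, hFπ]; ring
  have main : ¬ (∀ x ∈ Ioo (0:ℝ) π,
      0 < lam ^ 2 / 4 * u x - (lam - (u x) ^ 2) * (u x) ^ 2) := by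
    intro h
    have hGpos : ∀ x ∈ Ioo (0:ℝ) π, 0 < G x := by
      intro x hx
      have hsinpos : 0 < Real.sin x := Real.sin_pos_of_pos_of_lt_pi hx.1 hx.2
      have hodex := hode x hx
      have hux := h x hx
      have heq : u'' x + lam * u' x + (lam ^ 2 / 4 + 1) * u x
          = lam ^ 2 / 4 * u x - (lam - (u x) ^ 2) * (u x) ^ 2 := by linarith
      simp only [hG, heq]
      positivity
    have := intervalIntegral.intervalIntegral_pos_of_pos_on hGint hGpos hπ
    linarith [hzero ▸ this]
  have hlampos : 0 < lam := by
    by_contra hl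
    push_neg at hl
    apply main
    intro x hx
    have ht := hpos x hx
    nlinarith [sq_nonneg (u x), sq_nonneg lam, mul_pos ht ht]
  refine ⟨hlampos, ?_⟩
  have h16 : lam ≤ 16 := by
    by_contra hl
    push_neg at hl
    apply main
    intro x hx
    have ht := hpos x hx
    rcases le_or_gt (u x) 1 with h1 | h1
    · nlinarith [mul_pos (mul_pos hlampos ht) (show 0 < lam / 4 - u x by linarith),
        mul_pos (mul_pos (mul_pos ht ht) ht) ht]
    · nlinarith [sq_nonneg (lam - 2 * u x), mul_pos ht ht,
        mul_pos (mul_pos ht ht) ht, mul_pos (mul_pos (mul_pos ht ht) ht) ht]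
  have hs2 : (1:ℝ) ≤ Real.sqrt 2 := by
    rw [show (1:ℝ) = Real.sqrt 1 by simp]
    exact Real.sqrt_le_sqrt (by norm_num)
  nlinarith [hs2]
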